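/- For every integer k ≥ 1 and every N with 2(k−1)² + 2(k−1) + 1 < N ≤ 2k² + 2k + 1, the circulant graph on Z_N with connection set {±k, ±(k+1)} has diameter exactly k; equivalently, every residue mod N can be written as m·k + n·(k+1) (mod N) with |m| + |n| ≤ k, and some residue requires |m| + |n| = k. -/
import Mathlib

-- Part 1 core: every integer v with |v| ≤ k²+k is m*k+n*(k+1) with |m|+|n| ≤ k
theorem cover (k : ℕ) (hk : 1 ≤ k) (v : ℤ)
    (hv1 : -((k:ℤ)^2 + k) ≤ v) (hv2 : v ≤ (k:ℤ)^2 + k) :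
    ∃ m n : ℤ, m.natAbs + n.natAbs ≤ k ∧ m * k + n * (k + 1) = v := by
  have hK1 : 1 ≤ (k:ℤ) := by exact_mod_cast hk
  set K : ℤ := (k : ℤ) with hKdef
  set s : ℤ := (2*v + K) / (2*K + 1) with hsdef
  set t : ℤ := (2*v + K) % (2*K + 1) with htdef
  have hpos : (0:ℤ) < 2*K+1 := by linarith
  have ht0 : 0 ≤ t := Int.emod_nonneg _ (by linarith)
  have ht1 : t < 2*K+1 := Int.emod_lt_of_pos _ hpos
  have heq : (2*K+1) * s + t = 2*v + K := Int.mul_ediv_add_emod _ _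
  have hsle : s ≤ K := by
    by_contra h
    push_neg at h
    have h' : K + 1 ≤ s := h
    have := mul_le_mul_of_nonneg_left h' (le_of_lt hpos)
    nlinarith
  have hsge : -K ≤ s := by
    by_contra h
    push_neg at h
    have h' : s ≤ -K - 1 := by linarith
    have := mul_le_mul_of_nonneg_left h' (le_of_lt hpos)
    nlinarith
  refine ⟨s*(K+1) - v, v - s*K, ?_, by ring⟩
  have hmid : s - 2*(v - s*K) = K - t := by linear_combination heq
  have hm : s*(K+1) - v = s - (v - s*K) := by ring
  rw [hm]
  set a : ℤ := v - s*K with hadef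
  clear_value a
  omega


theorem keyz (k : ℕ) (hk : 1 ≤ k) (M : ℕ)
    (hM : (M:ℤ) = 2*((k:ℤ)-1)^2 + 2*((k:ℤ)-1) + 1)
    (a b : ℤ) (hab : a.natAbs + b.natAbs ≤ 2*(k-1))
    (hdvd : (M:ℤ) ∣ a * ((k:ℤ)-1) + b * k) : a = 0 ∧ b = 0 := by
  have hK1 : 1 ≤ (k:ℤ) := by exact_mod_cast hk
  have habZ : |a| + |b| ≤ 2*((k:ℤ)-1) := by
    rw [Int.abs_eq_natAbs, Int.abs_eq_natAbs]; omega
  have hbound : |a * ((k:ℤ)-1) + b * k| < (M:ℤ) := by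
    calc |a * ((k:ℤ)-1) + b * k| ≤ |a| * ((k:ℤ)-1) + |b| * k := by
          refine (abs_add_le _ _).trans ?_
          gcongr ?_ + ?_ <;> rw [abs_mul] <;> gcongr
          · rw [abs_of_nonneg]; linarith
          · rw [abs_of_nonneg]; linarith
      _ ≤ (|a| + |b|) * k := by nlinarith [abs_nonneg a, abs_nonneg b]
      _ < (M:ℤ) := by rw [hM]; nlinarith [abs_nonneg a, abs_nonneg b]
  have hz : a * ((k:ℤ)-1) + b * k = 0 := Int.eq_zero_of_abs_lt_dvd hdvd hbound
  have hc : a = (k:ℤ) * (a + b) := by linarith [hz]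
  have hb : b = (1 - (k:ℤ)) * (a + b) := by linarith [hz, hc]
  have hKnn : (0:ℤ) ≤ (k:ℤ) := by linarith
  have hc0 : a + b = 0 := by
    rcases lt_trichotomy (a + b) 0 with h | h | h
    · have h1 : a + b ≤ -1 := by omega
      have p1 := mul_le_mul_of_nonneg_left h1 hKnn
      have p2 := mul_le_mul_of_nonneg_left h1 (by linarith : (0:ℤ) ≤ (k:ℤ) - 1)
      have q1 : a ≤ -(k:ℤ) := by rw [hc]; linarith
      have q2 : (k:ℤ) - 1 ≤ b := by rw [hb]; linarith
      omega
    · exact h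
    · have h1 : 1 ≤ a + b := by omega
      have p1 := mul_le_mul_of_nonneg_left h1 hKnn
      have p2 := mul_le_mul_of_nonneg_left h1 (by linarith : (0:ℤ) ≤ (k:ℤ) - 1)
      have q1 : (k:ℤ) ≤ a := by rw [hc]; linarith
      have q2 : b ≤ 1 - (k:ℤ) := by rw [hb]; linarith
      omega
  constructor
  · rw [hc, hc0]; ring
  · rw [hb, hc0]; ring

theorem lower (k : ℕ) (hk : 1 ≤ k) (N : ℕ)
    (h1 : 2 * (k - 1) ^ 2 + 2 * (k - 1) + 1 < N) :
    ∃ j : ℤ, ∀ m n : ℤ, (N : ℤ) ∣ (m * k + n * (k + 1) - j) →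
      k ≤ m.natAbs + n.natAbs := by
  have hK1 : 1 ≤ (k:ℤ) := by exact_mod_cast hk
  haveI : NeZero N := ⟨by omega⟩
  haveI : NeZero (2 * (k - 1) ^ 2 + 2 * (k - 1) + 1) := ⟨by omega⟩
  have hMcast : ((2 * (k - 1) ^ 2 + 2 * (k - 1) + 1 : ℕ) : ℤ)
      = 2*((k:ℤ)-1)^2 + 2*((k:ℤ)-1) + 1 := by
    push_cast [Nat.cast_sub hk]; ring
  classical
  let D : Finset (ℤ × ℤ) :=
    (Finset.Icc (-(k:ℤ)) (k:ℤ) ×ˢ Finset.Icc (-(k:ℤ)) (k:ℤ)).filter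
      (fun p => p.1.natAbs + p.2.natAbs ≤ k - 1)
  have hmemD : ∀ p : ℤ × ℤ, p ∈ D ↔ p.1.natAbs + p.2.natAbs ≤ k - 1 := by
    intro p
    simp only [D, Finset.mem_filter, Finset.mem_product, Finset.mem_Icc]
    omega
  have hginj : Set.InjOn
      (fun p : ℤ × ℤ => ((p.1 * ((k:ℤ)-1) + p.2 * k : ℤ) : ZMod (2 * (k - 1) ^ 2 + 2 * (k - 1) + 1))) D := by
    intro p hp q hq hpq
    rw [Finset.mem_coe, hmemD] at hp hq
    have hdvd : ((2 * (k - 1) ^ 2 + 2 * (k - 1) + 1 : ℕ):ℤ) ∣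
        (p.1 - q.1) * ((k:ℤ)-1) + (p.2 - q.2) * k := by
      have h0 : (((p.1 * ((k:ℤ)-1) + p.2 * k) - (q.1 * ((k:ℤ)-1) + q.2 * k) : ℤ) :
          ZMod (2 * (k - 1) ^ 2 + 2 * (k - 1) + 1)) = 0 := by
        push_cast
        rw [sub_eq_zero]
        exact_mod_cast hpq
      have := (ZMod.intCast_zmod_eq_zero_iff_dvd _ _).mp h0
      convert this using 1
      ring
    have := keyz k hk _ hMcast (p.1 - q.1) (p.2 - q.2) (by omega) hdvd
    have h1 := this.1
    have h2 := this.2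
    exact Prod.ext (by omega) (by omega)
  have hcard : D.card < N := by
    have h1' : (D.image (fun p : ℤ × ℤ => ((p.1 * ((k:ℤ)-1) + p.2 * k : ℤ) :
        ZMod (2 * (k - 1) ^ 2 + 2 * (k - 1) + 1)))).card = D.card :=
      Finset.card_image_of_injOn hginj
    have h2' := Finset.card_le_univ (D.image (fun p : ℤ × ℤ => ((p.1 * ((k:ℤ)-1) + p.2 * k : ℤ) :
        ZMod (2 * (k - 1) ^ 2 + 2 * (k - 1) + 1))))
    rw [ZMod.card] at h2'
    omega
  -- pigeonhole in ZMod N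
  obtain ⟨x, hx⟩ : ∃ x : ZMod N, x ∉ D.image
      (fun p : ℤ × ℤ => ((p.1 * (k:ℤ) + p.2 * ((k:ℤ)+1) : ℤ) : ZMod N)) := by
    by_contra h
    push_neg at h
    have hsub : (Finset.univ : Finset (ZMod N)) ⊆ D.image _ := fun x _ => h x
    have := Finset.card_le_card hsub
    rw [Finset.card_univ, ZMod.card] at this
    have := Finset.card_image_le (s := D)
      (f := fun p : ℤ × ℤ => ((p.1 * (k:ℤ) + p.2 * ((k:ℤ)+1) : ℤ) : ZMod N))
    omega
  refine ⟨(x.val : ℤ), ?_⟩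
  intro m n hdvd
  by_contra hlt
  push_neg at hlt
  have hmem : (m, n) ∈ D := (hmemD (m, n)).mpr (by omega)
  have hfx : ((m * (k:ℤ) + n * ((k:ℤ)+1) : ℤ) : ZMod N) = x := by
    have h0 : ((m * (k:ℤ) + n * ((k:ℤ)+1) - (x.val : ℤ) : ℤ) : ZMod N) = 0 :=
      (ZMod.intCast_zmod_eq_zero_iff_dvd _ _).mpr hdvd
    push_cast at h0 ⊢
    rw [sub_eq_zero] at h0
    rw [h0, ZMod.natCast_val, ZMod.cast_id]
  exact hx (Finset.mem_image.mpr ⟨(m, n), hmem, hfx⟩)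

theorem stmt_8 (k : ℕ) (hk : 1 ≤ k) (N : ℕ)
    (h1 : 2 * (k - 1) ^ 2 + 2 * (k - 1) + 1 < N)
    (h2 : N ≤ 2 * k ^ 2 + 2 * k + 1) :
    (∀ j : ℤ, ∃ m n : ℤ, m.natAbs + n.natAbs ≤ k ∧
      (N : ℤ) ∣ (m * k + n * (k + 1) - j)) ∧
    (∃ j : ℤ, ∀ m n : ℤ, (N : ℤ) ∣ (m * k + n * (k + 1) - j) →
      k ≤ m.natAbs + n.natAbs) := by
  have hN0 : (0:ℤ) < N := by exact_mod_cast (by omega : 0 < N)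
  have hK1 : 1 ≤ (k:ℤ) := by exact_mod_cast hk
  have hNle : (N:ℤ) ≤ 2*(k:ℤ)^2 + 2*(k:ℤ) + 1 := by exact_mod_cast h2
  constructor
  · intro j
    have hr0 : 0 ≤ j % (N:ℤ) := Int.emod_nonneg j (by linarith)
    have hr1 : j % (N:ℤ) < N := Int.emod_lt_of_pos j hN0
    have hdr : (N:ℤ) ∣ j % (N:ℤ) - j := by
      have h : j % (N:ℤ) - j = -((N:ℤ) * (j / N)) := by rw [Int.emod_def]; ring
      rw [h]
      exact dvd_neg.mpr (dvd_mul_right _ _)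
    by_cases hc : j % (N:ℤ) ≤ (k:ℤ)^2 + k
    · obtain ⟨m, n, hw, he⟩ := cover k hk (j % (N:ℤ)) (by linarith) hc
      refine ⟨m, n, hw, ?_⟩
      rw [show m*(k:ℤ) + n*((k:ℤ)+1) - j
        = (m*(k:ℤ) + n*((k:ℤ)+1)) - (j % (N:ℤ)) + (j % (N:ℤ) - j) from by ring,
        he, sub_self, zero_add]
      exact hdr
    · push_neg at hc
      obtain ⟨m, n, hw, he⟩ := cover k hk (j % (N:ℤ) - N) (by linarith) (by linarith)
      refine ⟨m, n, hw, ?_⟩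
      rw [show m*(k:ℤ) + n*((k:ℤ)+1) - j
        = (m*(k:ℤ) + n*((k:ℤ)+1)) - (j % (N:ℤ) - N) + (j % (N:ℤ) - j) + -1 * N from by ring,
        he, sub_self, zero_add]
      exact dvd_add hdr ⟨-1, by ring⟩
  · exact lower k hk N h1
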